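/- Let G₁, G₂ : [a,b] → ℝ be continuous with G₁(x) > G₂(x) for all x ∈ [a,b]. Let u, v : [a,b] → ℝ be twice continuously differentiable with u″(x) = G₁(x) u(x) and v″(x) = G₂(x) v(x) on [a,b], and suppose u is not identically zero and v is not identically zero. If x₁ < x₂ are consecutive zeros of u in [a,b] (that is, u(x₁) = u(x₂) = 0 and u(x) ≠ 0 for x₁ < x < x₂), then v has a zero in the open interval (x₁, x₂). -/

import Mathlib

open Set Filter Topology

lemma sturm_const_sign {f : ℝ → ℝ} {x₁ x₂ : ℝ}
    (hc : ContinuousOn f (Set.Ioo x₁ x₂)) (hne : ∀ x ∈ Set.Ioo x₁ x₂, f x ≠ 0) :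
    ∃ s : ℝ, (s = 1 ∨ s = -1) ∧ ∀ x ∈ Set.Ioo x₁ x₂, 0 < s * f x := by
  by_cases hpos : ∀ x ∈ Set.Ioo x₁ x₂, 0 < f x
  · exact ⟨1, Or.inl rfl, fun x hx => by simpa using hpos x hx⟩
  · refine ⟨-1, Or.inr rfl, fun x hx => ?_⟩
    push_neg at hpos
    obtain ⟨y, hy, hfy⟩ := hpos
    have hfy' : f y < 0 := lt_of_le_of_ne hfy (hne y hy)
    by_contra h
    push_neg at h
    have hfx : 0 < f x := lt_of_le_of_ne (by nlinarith) (Ne.symm (hne x hx))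
    have hsub : Set.uIcc x y ⊆ Set.Ioo x₁ x₂ :=
      Set.OrdConnected.uIcc_subset Set.ordConnected_Ioo hx hy
    have h0 : (0:ℝ) ∈ Set.uIcc (f x) (f y) :=
      Set.mem_uIcc.mpr (Or.inr ⟨hfy'.le, hfx.le⟩)
    obtain ⟨z, hz, hz0⟩ := intermediate_value_uIcc (hc.mono hsub) h0
    exact hne z (hsub hz) hz0

/-- Sturm's comparison theorem: if `u'' = G₁ u` and `v'' = G₂ v` on
`[a,b]` with `G₁ > G₂` continuous on `[a,b]`, `u` and `v` not identically zero, and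
`x₁ < x₂` are consecutive zeros of `u` in `[a,b]`, then `v` vanishes somewhere in
the open interval `(x₁, x₂)`. -/
theorem sturm_comparison
    (a b : ℝ) (hab : a ≤ b) (G₁ G₂ : ℝ → ℝ)
    (hG₁ : ContinuousOn G₁ (Set.Icc a b)) (hG₂ : ContinuousOn G₂ (Set.Icc a b))
    (hGG : ∀ x ∈ Set.Icc a b, G₂ x < G₁ x)
    (u v u' v' : ℝ → ℝ)
    (hu' : ∀ x ∈ Set.Icc a b, HasDerivAt u (u' x) x)
    (hu'' : ∀ x ∈ Set.Icc a b, HasDerivAt u' (G₁ x * u x) x)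
    (hv' : ∀ x ∈ Set.Icc a b, HasDerivAt v (v' x) x)
    (hv'' : ∀ x ∈ Set.Icc a b, HasDerivAt v' (G₂ x * v x) x)
    (hu_ne : ∃ x ∈ Set.Icc a b, u x ≠ 0)
    (hv_ne : ∃ x ∈ Set.Icc a b, v x ≠ 0)
    (x₁ x₂ : ℝ) (hx₁ : x₁ ∈ Set.Icc a b) (hx₂ : x₂ ∈ Set.Icc a b) (h12 : x₁ < x₂)
    (hu1 : u x₁ = 0) (hu2 : u x₂ = 0)
    (hcons : ∀ x : ℝ, x₁ < x → x < x₂ → u x ≠ 0) :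
    ∃ x : ℝ, x₁ < x ∧ x < x₂ ∧ v x = 0 := by
  by_contra hcon
  push_neg at hcon
  have hsub : Set.Icc x₁ x₂ ⊆ Set.Icc a b := Set.Icc_subset_Icc hx₁.1 hx₂.2
  have hsubo : Set.Ioo x₁ x₂ ⊆ Set.Icc a b := fun x hx => hsub (Set.Ioo_subset_Icc_self hx)
  have hucont : ContinuousOn u (Set.Icc a b) :=
    fun x hx => ((hu' x hx).continuousAt).continuousWithinAt
  have hvcont : ContinuousOn v (Set.Icc a b) :=
    fun x hx => ((hv' x hx).continuousAt).continuousWithinAt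
  obtain ⟨s, hs, hsu⟩ := sturm_const_sign (hucont.mono hsubo)
    (fun x hx => hcons x hx.1 hx.2)
  obtain ⟨t, ht, htv⟩ := sturm_const_sign (hvcont.mono hsubo)
    (fun x hx => fun h0 => hcon x hx.1 hx.2 h0)
  set W : ℝ → ℝ := fun x => s * t * (u' x * v x - u x * v' x) with hWdef
  have hW' : ∀ x ∈ Set.Icc a b, HasDerivAt W (s * t * ((G₁ x - G₂ x) * (u x * v x))) x := by
    intro x hx
    have h1 := (((hu'' x hx).mul (hv' x hx)).sub ((hu' x hx).mul (hv'' x hx))).const_mul (s * t)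
    convert h1 using 1
    all_goals first | rfl | ring
  have hWcont : ContinuousOn W (Set.Icc x₁ x₂) :=
    fun x hx => ((hW' x (hsub hx)).continuousAt).continuousWithinAt
  have hmono : StrictMonoOn W (Set.Icc x₁ x₂) := by
    apply strictMonoOn_of_deriv_pos (convex_Icc _ _) hWcont
    intro x hx
    rw [interior_Icc] at hx
    rw [(hW' x (hsubo hx)).deriv]
    have h1 : 0 < G₁ x - G₂ x := sub_pos.mpr (hGG x (hsubo hx))
    nlinarith [mul_pos (mul_pos h1 (hsu x hx)) (htv x hx)]
  have hWlt : W x₁ < W x₂ :=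
    hmono (Set.left_mem_Icc.mpr h12.le) (Set.right_mem_Icc.mpr h12.le) h12
  have hne1 : 𝓝[>] x₁ ≤ 𝓝[≠] x₁ :=
    nhdsWithin_mono _ (fun x hx => Set.mem_compl_singleton_iff.mpr (Set.mem_Ioi.mp hx).ne')
  have hne2 : 𝓝[<] x₂ ≤ 𝓝[≠] x₂ :=
    nhdsWithin_mono _ (fun x hx => Set.mem_compl_singleton_iff.mpr (Set.mem_Iio.mp hx).ne)
  have hmem1 : Set.Ioo x₁ x₂ ∈ 𝓝[>] x₁ :=
    Ioo_mem_nhdsGT h12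
  have hmem2 : Set.Ioo x₁ x₂ ∈ 𝓝[<] x₂ :=
    Ioo_mem_nhdsLT h12
  -- sign of s * u' x₁
  have hsu1 : 0 ≤ s * u' x₁ := by
    have hslope : Tendsto (fun x => s * slope u x₁ x) (𝓝[>] x₁) (𝓝 (s * u' x₁)) :=
      ((hasDerivAt_iff_tendsto_slope.mp (hu' x₁ hx₁)).mono_left hne1).const_mul s
    refine ge_of_tendsto hslope ?_
    filter_upwards [hmem1] with x hx
    rw [slope_def_field]
    have := div_pos (hsu x hx) (sub_pos.mpr hx.1)
    rw [hu1, sub_zero, ← mul_div_assoc]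
    exact this.le
  have hsu2 : s * u' x₂ ≤ 0 := by
    have hslope : Tendsto (fun x => s * slope u x₂ x) (𝓝[<] x₂) (𝓝 (s * u' x₂)) :=
      ((hasDerivAt_iff_tendsto_slope.mp (hu' x₂ hx₂)).mono_left hne2).const_mul s
    refine le_of_tendsto hslope ?_
    filter_upwards [hmem2] with x hx
    rw [slope_def_field]
    have := div_neg_of_pos_of_neg (hsu x hx) (sub_neg.mpr hx.2)
    rw [hu2, sub_zero, ← mul_div_assoc]
    exact this.le
  have htv1 : 0 ≤ t * v x₁ := by
    have hc : Tendsto (fun x => t * v x) (𝓝[>] x₁) (𝓝 (t * v x₁)) :=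
      ((hv' x₁ hx₁).continuousAt.tendsto.mono_left nhdsWithin_le_nhds).const_mul t
    refine ge_of_tendsto hc ?_
    filter_upwards [hmem1] with x hx
    exact (htv x hx).le
  have htv2 : 0 ≤ t * v x₂ := by
    have hc : Tendsto (fun x => t * v x) (𝓝[<] x₂) (𝓝 (t * v x₂)) :=
      ((hv' x₂ hx₂).continuousAt.tendsto.mono_left nhdsWithin_le_nhds).const_mul t
    refine ge_of_tendsto hc ?_
    filter_upwards [hmem2] with x hx
    exact (htv x hx).le
  have hW1 : W x₁ = (s * u' x₁) * (t * v x₁) := by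
    simp only [hWdef, hu1]; ring
  have hW2 : W x₂ = (s * u' x₂) * (t * v x₂) := by
    simp only [hWdef, hu2]; ring
  have h1 : 0 ≤ W x₁ := hW1 ▸ mul_nonneg hsu1 htv1
  have h2 : W x₂ ≤ 0 := hW2 ▸ mul_nonpos_of_nonpos_of_nonneg hsu2 htv2
  linarith
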